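/- Let X̃ be a k×(p+1) real matrix with entries in [-1,1] such that X̃ᵀX̃ is invertible. Then tr((X̃ᵀX̃)⁻¹) ≥ (p+1)/k, with equality if and only if X̃ᵀX̃ = k·I. -/

import Mathlib

open Matrix Finset

-- auxiliary scalar inequality
lemma aux_sum_inv {n : ℕ} (l : Fin n → ℝ) (k : ℝ) (hk : 0 < k)
    (hl : ∀ i, 0 < l i) (hsum : ∑ i, l i ≤ k * n) :
    (n : ℝ) / k ≤ ∑ i, (l i)⁻¹ ∧
    ((∑ i, (l i)⁻¹) = (n : ℝ) / k ↔ ∀ i, l i = k) := by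
  have key : ∑ i, (l i)⁻¹ =
      (n : ℝ) / k + (∑ i, (l i - k)^2 / (k^2 * l i)) + (k * n - ∑ i, l i) / k^2 := by
    have h1 : ∀ i, (l i)⁻¹ = (l i - k)^2 / (k^2 * l i) + (2 / k - l i / k^2) := by
      intro i
      have hki := (hl i).ne'
      have hk' := hk.ne'
      field_simp
      ring
    rw [Finset.sum_congr rfl (fun i _ => h1 i), Finset.sum_add_distrib, Finset.sum_sub_distrib,
      Finset.sum_const, Finset.card_univ, Fintype.card_fin, ← Finset.sum_div]
    have hk' := hk.ne'
    generalize (∑ i, (l i - k)^2 / (k^2 * l i)) = T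
    generalize (∑ i, l i) = S
    rw [nsmul_eq_mul]
    field_simp
    ring
  have hT : 0 ≤ ∑ i, (l i - k)^2 / (k^2 * l i) :=
    Finset.sum_nonneg fun i _ => div_nonneg (sq_nonneg _)
      (mul_nonneg (sq_nonneg _) (hl i).le)
  have hR : 0 ≤ (k * n - ∑ i, l i) / k^2 :=
    div_nonneg (by linarith) (sq_nonneg _)
  constructor
  · rw [key]; linarith
  constructor
  · intro heq
    have hT0 : ∑ i, (l i - k)^2 / (k^2 * l i) = 0 := by rw [key] at heq; linarith
    intro i
    have := (Finset.sum_eq_zero_iff_of_nonneg (fun i _ => div_nonneg (sq_nonneg _)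
      (mul_nonneg (sq_nonneg _) (hl i).le))).mp hT0 i (Finset.mem_univ i)
    have hden : 0 < k^2 * l i := mul_pos (by positivity) (hl i)
    rw [div_eq_zero_iff] at this
    rcases this with h2 | h2
    · have := pow_eq_zero_iff (n := 2) (by norm_num) |>.mp h2
      linarith
    · linarith
  · intro hall
    rw [Finset.sum_congr rfl (fun i _ => by rw [hall i]), Finset.sum_const]
    simp [div_eq_mul_inv, mul_comm]

theorem trace_inv_gram_ge (k p : ℕ) (X : Matrix (Fin k) (Fin (p + 1)) ℝ)
    (hX : ∀ i j, X i j ∈ Set.Icc (-1 : ℝ) 1)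
    (hinv : IsUnit (Xᵀ * X).det) :
    ((p : ℝ) + 1) / k ≤ (Xᵀ * X)⁻¹.trace ∧
    ((Xᵀ * X)⁻¹.trace = ((p : ℝ) + 1) / k ↔ Xᵀ * X = (k : ℝ) • 1) := by
  set A := Xᵀ * X with hA_def
  have hpsd : A.PosSemidef := by
    rw [hA_def, ← conjTranspose_eq_transpose_of_trivial]
    exact posSemidef_conjTranspose_mul_self X
  have hA : A.IsHermitian := hpsd.1
  set l := hA.eigenvalues with hl_def
  set U : Matrix (Fin (p+1)) (Fin (p+1)) ℝ := (hA.eigenvectorUnitary : Matrix (Fin (p+1)) (Fin (p+1)) ℝ) with hU_def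
  have hUU : U * star U = 1 := (Matrix.mem_unitaryGroup_iff).mp hA.eigenvectorUnitary.2
  have hUU' : star U * U = 1 := (Matrix.mem_unitaryGroup_iff').mp hA.eigenvectorUnitary.2
  have hspec : A = U * diagonal l * star U := by
    have h := hA.spectral_theorem
    simpa using h
  -- eigenvalues positive
  have hlpos : ∀ i, 0 < l i := by
    intro i
    rcases lt_or_eq_of_le (hpsd.eigenvalues_nonneg i) with h | h
    · exact h
    · exfalso
      have hdet : A.det = ∏ i, l i := by
        have := hA.det_eq_prod_eigenvalues
        simpa using this
      rw [hdet] at hinv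
      exact absurd (Finset.prod_eq_zero (Finset.mem_univ i) h.symm) (by
        intro h0; rw [h0] at hinv; exact (not_isUnit_zero hinv))
  -- diagonal entries ≤ k
  have hdiag : ∀ j, A j j ≤ (k : ℝ) := by
    intro j
    have : A j j = ∑ i, X i j * X i j := by
      simp [hA_def, Matrix.mul_apply, transpose_apply]
    rw [this]
    calc ∑ i, X i j * X i j ≤ ∑ _i : Fin k, (1:ℝ) := by
          apply Finset.sum_le_sum
          intro i _
          have h := hX i j
          nlinarith [h.1, h.2]
      _ = k := by simp
  -- trace A = sum of eigenvalues
  have htrA : A.trace = ∑ i, l i := by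
    rw [hspec, Matrix.trace_mul_cycle, hUU', Matrix.one_mul, Matrix.trace_diagonal]
  have hsum_le : ∑ i, l i ≤ (k : ℝ) * (p + 1) := by
    rw [← htrA]
    calc A.trace = ∑ j, A j j := rfl
      _ ≤ ∑ _j : Fin (p+1), (k : ℝ) := Finset.sum_le_sum fun j _ => hdiag j
      _ = (k : ℝ) * (p+1) := by simp [mul_comm]
  have hk : (0 : ℝ) < k := by
    by_contra hk0
    push_neg at hk0
    have h0 : (0:ℝ) < ∑ i, l i := Finset.sum_pos (fun i _ => hlpos i) ⟨⟨0, Nat.succ_pos p⟩, Finset.mem_univ _⟩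
    nlinarith [hsum_le]
  -- inverse formula
  have hAinv : A⁻¹ = U * diagonal (fun i => (l i)⁻¹) * star U := by
    apply Matrix.inv_eq_right_inv
    rw [hspec]
    calc U * diagonal l * star U * (U * diagonal (fun i => (l i)⁻¹) * star U)
        = U * diagonal l * (star U * U) * diagonal (fun i => (l i)⁻¹) * star U := by
          noncomm_ring
      _ = U * (diagonal l * diagonal (fun i => (l i)⁻¹)) * star U := by
          rw [hUU']; noncomm_ring
      _ = 1 := by
          rw [Matrix.diagonal_mul_diagonal]
          have : (fun i => l i * (l i)⁻¹) = fun _ => (1:ℝ) := by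
            funext i; exact mul_inv_cancel₀ (hlpos i).ne'
          rw [this, Matrix.diagonal_one, Matrix.mul_one, hUU]
  have htrinv : A⁻¹.trace = ∑ i, (l i)⁻¹ := by
    rw [hAinv, Matrix.trace_mul_cycle, hUU', Matrix.one_mul, Matrix.trace_diagonal]
  obtain ⟨hge, hiff⟩ := aux_sum_inv l (k : ℝ) hk hlpos (by
    simpa [Nat.cast_add, Nat.cast_one] using hsum_le)
  have hcast : ((p : ℝ) + 1) = ((p + 1 : ℕ) : ℝ) := by push_cast; ring
  constructor
  · rw [htrinv, hcast]; exact hge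
  constructor
  · intro heq
    rw [htrinv, hcast] at heq
    have hall := hiff.mp heq
    have : diagonal l = (k : ℝ) • (1 : Matrix (Fin (p+1)) (Fin (p+1)) ℝ) := by
      ext i j
      rcases eq_or_ne i j with h | h <;> simp [h, hall, Matrix.one_apply]
    rw [hspec, this]
    rw [Matrix.mul_smul, Matrix.smul_mul, Matrix.mul_one, hUU]
  · intro hAeq
    have hAinv' : A⁻¹ = (k : ℝ)⁻¹ • 1 := by
      apply Matrix.inv_eq_right_inv
      rw [hAeq, smul_mul_smul_comm, Matrix.one_mul, mul_inv_cancel₀ hk.ne', one_smul]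
    rw [hAinv', Matrix.trace_smul, Matrix.trace_one]
    simp [div_eq_mul_inv, mul_comm]
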